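/- For any finite set 𝓢 of balls in a directed family with U ∈ 𝓑, the set Ch(𝓢) is constructible, and the swiss cheeses B \ ⋃Sub(B,𝓢) for B on even levels of (𝓢,⊆) are pairwise disjoint. -/

import Mathlib

variable {U : Type*}

/-- A directed family: nonempty sets, any two nested or disjoint. -/
def DirFam (𝓑 : Set (Set U)) : Prop :=
  (∀ B ∈ 𝓑, B.Nonempty) ∧
    ∀ B₀ ∈ 𝓑, ∀ B₁ ∈ 𝓑, B₀ ⊆ B₁ ∨ B₁ ⊆ B₀ ∨ B₀ ∩ B₁ = ∅

/-- Constructible sets: finite boolean combinations of balls. -/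
inductive Constr (𝓑 : Set (Set U)) : Set U → Prop
  | ball {B : Set U} : B ∈ 𝓑 → Constr 𝓑 B
  | compl {X : Set U} : Constr 𝓑 X → Constr 𝓑 Xᶜ
  | union {X Y : Set U} : Constr 𝓑 X → Constr 𝓑 Y → Constr 𝓑 (X ∪ Y)

/-- Levels of a (finite) subset of a partial order: Lev 0 is the set of maximal
elements, and Lev (n+1) is Lev n of the set with its maximal elements removed. -/
def Lev {α : Type*} [PartialOrder α] : ℕ → Set α → Set α
  | 0, S => {a | a ∈ S ∧ ∀ b ∈ S, a ≤ b → a = b}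
  | n + 1, S => Lev n (S \ {a | a ∈ S ∧ ∀ b ∈ S, a ≤ b → a = b})

/-- The swiss cheese operator: the union, over balls B on even levels of 𝓢, of
B minus the union of its immediate predecessors (the next-level balls inside B). -/
def Ch (𝓢 : Set (Set U)) : Set U :=
  ⋃ n : ℕ, ⋃ B ∈ Lev (2 * n) 𝓢, B \ ⋃₀ {C | C ∈ Lev (2 * n + 1) 𝓢 ∧ C ⊆ B}

section Aux

variable {α : Type*} [PartialOrder α]

/-- The set of maximal elements. -/
def maxSet (S : Set α) : Set α := {a | a ∈ S ∧ ∀ b ∈ S, a ≤ b → a = b}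

/-- Remove the maximal elements. -/
def strip (S : Set α) : Set α := S \ maxSet S

lemma lev_eq_maxSet : ∀ (n : ℕ) (S : Set α), Lev n S = maxSet (strip^[n] S)
  | 0, _ => rfl
  | n + 1, S => by
      show Lev n (strip S) = _
      rw [lev_eq_maxSet n (strip S), ← Function.iterate_succ_apply]

lemma maxSet_subset (S : Set α) : maxSet S ⊆ S := fun _ h => h.1

lemma strip_subset (S : Set α) : strip S ⊆ S := Set.diff_subset

lemma strip_iter_subset (n : ℕ) (S : Set α) : strip^[n] S ⊆ S := by
  induction n with
  | zero => exact subset_rfl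
  | succ n ih => rw [Function.iterate_succ_apply']; exact (strip_subset _).trans ih

lemma strip_iter_anti {n m : ℕ} (h : n ≤ m) (S : Set α) : strip^[m] S ⊆ strip^[n] S := by
  obtain ⟨k, rfl⟩ := Nat.exists_eq_add_of_le h
  rw [Nat.add_comm, Function.iterate_add_apply]
  exact strip_iter_subset k _

lemma lev_subset (n : ℕ) (S : Set α) : Lev n S ⊆ S := by
  rw [lev_eq_maxSet]
  exact (maxSet_subset _).trans (strip_iter_subset _ _)

lemma maxSet_nonempty {S : Set α} (hfin : S.Finite) (hne : S.Nonempty) :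
    (maxSet S).Nonempty := by
  obtain ⟨a, ha, hmax⟩ : ∃ a ∈ S, ∀ b ∈ S, a ≤ b → a = b := by
    obtain ⟨a, h⟩ := hfin.exists_maximal hne
    exact ⟨a, h.1, fun b hb hab => le_antisymm hab (h.2 hb hab)⟩
  exact ⟨a, ha, hmax⟩

lemma exists_le_maxSet {S : Set α} (hfin : S.Finite) {a : α} (ha : a ∈ S) :
    ∃ b ∈ maxSet S, a ≤ b := by
  obtain ⟨b, hb, hmax⟩ : ∃ b ∈ {x ∈ S | a ≤ x}, ∀ c ∈ {x ∈ S | a ≤ x}, b ≤ c → b = c := by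
    obtain ⟨b, h⟩ := (hfin.subset (Set.sep_subset S _)).exists_maximal ⟨a, ha, le_refl a⟩
    exact ⟨b, h.1, fun c hc hbc => le_antisymm hbc (h.2 hc hbc)⟩
  refine ⟨b, ⟨hb.1, fun c hc hbc => ?_⟩, hb.2⟩
  exact hmax c ⟨hc, le_trans hb.2 hbc⟩ hbc

lemma strip_iter_empty : ∀ (n : ℕ) (S : Set α), S.Finite → S.ncard ≤ n → strip^[n] S = ∅ := by
  intro n
  induction n with
  | zero =>
      intro S hfin hcard
      exact (Set.ncard_eq_zero hfin).mp (Nat.le_zero.mp hcard)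
  | succ n ih =>
      intro S hfin hcard
      rw [Function.iterate_succ_apply]
      rcases S.eq_empty_or_nonempty with rfl | hne
      · have : strip (∅ : Set α) = ∅ := by simp [strip]
        rw [this]
        exact ih ∅ (Set.finite_empty) (by simp)
      · obtain ⟨a, ha⟩ := maxSet_nonempty hfin hne
        have hss : strip S ⊂ S := ⟨strip_subset S, fun hsub => (hsub ha.1).2 ha⟩
        have hlt : (strip S).ncard < S.ncard := Set.ncard_lt_ncard hss hfin
        exact ih (strip S) (hfin.subset (strip_subset S)) (Nat.lt_succ_iff.mp (lt_of_lt_of_le hlt hcard))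

end Aux

lemma constr_empty {𝓑 : Set (Set U)} (hU : (Set.univ : Set U) ∈ 𝓑) :
    Constr 𝓑 (∅ : Set U) := by
  have := Constr.compl (Constr.ball hU)
  simpa using this

lemma constr_sUnion {𝓑 : Set (Set U)} (hU : (Set.univ : Set U) ∈ 𝓑) {S : Set (Set U)}
    (hfin : S.Finite) (h : ∀ X ∈ S, Constr 𝓑 X) : Constr 𝓑 (⋃₀ S) := by
  classical
  revert h
  refine Set.Finite.induction_on (motive := fun S _ => (∀ X ∈ S, Constr 𝓑 X) → Constr 𝓑 (⋃₀ S)) S hfin ?_ ?_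
  · intro _
    simpa using constr_empty hU
  · intro a s _ _ ih h
    rw [Set.sUnion_insert]
    exact Constr.union (h _ (Set.mem_insert _ _))
      (ih fun X hX => h X (Set.mem_insert_of_mem _ hX))

lemma constr_diff {𝓑 : Set (Set U)} {X Y : Set U} (hX : Constr 𝓑 X) (hY : Constr 𝓑 Y) :
    Constr 𝓑 (X \ Y) := by
  have : X \ Y = (Xᶜ ∪ Y)ᶜ := by rw [Set.compl_union, compl_compl, Set.diff_eq]
  rw [this]
  exact Constr.compl (Constr.union (Constr.compl hX) hY)

/-- Key structural lemma: if `C ⊊ B` with `B` on level `k`, then there is a ball `D`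
on level `k+1` with `C ⊆ D ⊆ B`. -/
lemma key {𝓑 : Set (Set U)} (h : DirFam 𝓑) {𝓢 : Set (Set U)} (h𝓢 : 𝓢 ⊆ 𝓑)
    (hfin : 𝓢.Finite) {k : ℕ} {B C : Set U} (hB : B ∈ Lev k 𝓢) (hC : C ∈ 𝓢)
    (hCB : C ⊆ B) (hne : C ≠ B) : ∃ D ∈ Lev (k + 1) 𝓢, C ⊆ D ∧ D ⊆ B := by
  rw [lev_eq_maxSet] at hB
  have hstep : ∀ j, j ≤ k + 1 → C ∈ strip^[j] 𝓢 := by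
    intro j
    induction j with
    | zero => intro _; exact hC
    | succ j ih =>
        intro hj
        have hj' : j ≤ k := Nat.lt_succ_iff.mp hj
        rw [Function.iterate_succ_apply']
        exact ⟨ih (hj'.trans (Nat.le_succ k)),
          fun hmax => hne (hmax.2 B (strip_iter_anti hj' 𝓢 hB.1) hCB)⟩
  have hCk : C ∈ strip^[k + 1] 𝓢 := hstep (k + 1) le_rfl
  obtain ⟨D, hD, hCD⟩ := exists_le_maxSet (hfin.subset (strip_iter_subset _ _)) hCk
  refine ⟨D, by rw [lev_eq_maxSet]; exact hD, hCD, ?_⟩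
  have hD𝓢 : D ∈ 𝓢 := strip_iter_subset _ _ hD.1
  have hB𝓢 : B ∈ 𝓢 := strip_iter_subset _ _ hB.1
  obtain ⟨x, hx⟩ := h.1 C (h𝓢 hC)
  rcases h.2 D (h𝓢 hD𝓢) B (h𝓢 hB𝓢) with h1 | h1 | h1
  · exact h1
  · exfalso
    have hDk : D ∈ strip^[k] 𝓢 := strip_iter_anti (Nat.le_succ k) 𝓢 hD.1
    have hBD : B = D := hB.2 D hDk h1
    have hD' : D ∈ strip (strip^[k] 𝓢) := by
      have := hD.1
      rwa [Function.iterate_succ_apply'] at this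
    exact hD'.2 (hBD ▸ hB)
  · exfalso
    have : x ∈ D ∩ B := ⟨hCD hx, hCB hx⟩
    rw [h1] at this
    exact this

/-- Ch(𝓢) is constructible, and the swiss cheeses forming it (for distinct even-level
balls) are pairwise disjoint. -/
theorem stmt12 (𝓑 : Set (Set U)) (h : DirFam 𝓑) (hU : (Set.univ : Set U) ∈ 𝓑)
    (𝓢 : Set (Set U)) (h𝓢 : 𝓢 ⊆ 𝓑) (hfin : 𝓢.Finite) :
    Constr 𝓑 (Ch 𝓢) ∧
      ∀ (n m : ℕ) (B C : Set U), B ∈ Lev (2 * n) 𝓢 → C ∈ Lev (2 * m) 𝓢 → B ≠ C →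
        (B \ ⋃₀ {D | D ∈ Lev (2 * n + 1) 𝓢 ∧ D ⊆ B}) ∩
          (C \ ⋃₀ {D | D ∈ Lev (2 * m + 1) 𝓢 ∧ D ⊆ C}) = ∅ := by
  constructor
  · -- constructibility
    set N := 𝓢.ncard with hN
    have hlev_empty : ∀ m, N ≤ m → Lev m 𝓢 = (∅ : Set (Set U)) := by
      intro m hm
      rw [lev_eq_maxSet, strip_iter_empty m 𝓢 hfin hm]
      simp [maxSet]
    set f : ℕ → Set U :=
      fun n => ⋃ B ∈ Lev (2 * n) 𝓢, B \ ⋃₀ {C | C ∈ Lev (2 * n + 1) 𝓢 ∧ C ⊆ B} with hf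
    have hfempty : ∀ n, N ≤ n → f n = ∅ := by
      intro n hn
      have h2n : N ≤ 2 * n := le_trans hn (by omega)
      simp [hf, hlev_empty (2 * n) h2n]
    have hch : Ch 𝓢 = ⋃₀ (f '' Set.Iio N) := by
      have h1 : Ch 𝓢 = ⋃ n, f n := rfl
      rw [h1, Set.sUnion_image]
      ext x
      simp only [Set.mem_iUnion, Set.mem_Iio]
      constructor
      · rintro ⟨n, hn⟩
        rcases lt_or_ge n N with hlt | hge
        · exact ⟨n, hlt, hn⟩
        · rw [hfempty n hge] at hn; exact absurd hn (Set.notMem_empty x)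
      · rintro ⟨n, _, hn⟩; exact ⟨n, hn⟩
    rw [hch]
    refine constr_sUnion hU ((Set.finite_Iio N).image f) ?_
    rintro X ⟨n, -, rfl⟩
    have : f n = ⋃₀ ((fun B => B \ ⋃₀ {C | C ∈ Lev (2 * n + 1) 𝓢 ∧ C ⊆ B}) '' Lev (2 * n) 𝓢) := by
      rw [Set.sUnion_image]
    rw [this]
    refine constr_sUnion hU ((hfin.subset (lev_subset _ _)).image _) ?_
    rintro X ⟨B, hB, rfl⟩
    refine constr_diff (Constr.ball (h𝓢 (lev_subset _ _ hB))) ?_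
    refine constr_sUnion hU (hfin.subset fun C hC => lev_subset _ _ hC.1) ?_
    exact fun C hC => Constr.ball (h𝓢 (lev_subset _ _ hC.1))
  · intro n m B C hBlev hClev hne
    rw [Set.eq_empty_iff_forall_notMem]
    rintro x ⟨⟨hxB, hxnB⟩, hxC, hxnC⟩
    have hB𝓢 : B ∈ 𝓢 := lev_subset _ _ hBlev
    have hC𝓢 : C ∈ 𝓢 := lev_subset _ _ hClev
    rcases h.2 B (h𝓢 hB𝓢) C (h𝓢 hC𝓢) with h1 | h1 | h1
    · obtain ⟨D, hD, hBD, hDC⟩ := key h h𝓢 hfin hClev hB𝓢 h1 hne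
      exact hxnC ⟨D, ⟨hD, hDC⟩, hBD hxB⟩
    · obtain ⟨D, hD, hCD, hDB⟩ := key h h𝓢 hfin hBlev hC𝓢 h1 hne.symm
      exact hxnB ⟨D, ⟨hD, hDB⟩, hCD hxC⟩
    · exact (Set.eq_empty_iff_forall_notMem.mp h1 x) ⟨hxB, hxC⟩
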